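/- Let T be a torus with a finite-order automorphism σ of order n, and let [T,σ] denote the subtorus {t·σ(t)⁻¹ : t ∈ T}. Then: (a) every element of the finite group [T,σ] ∩ T^σ has order dividing n; (b) T = [T,σ]·(T^σ)⁰; (c) the cocharacter lattice of [T,σ] equals Ker(1 + σ + ... + σ^{n-1} | Y(T)). -/

import Mathlib

/-! Torus model: `T = Hom(X, kˣ)` with `X` the character lattice; `σ` acts on points
by precomposition; the identity component is the maximal divisible subgroup; a
cocharacter of `T` corresponds to an element `y` of the dual lattice
`Y = Hom(X, ℤ)`, acting as `λ ↦ (χ ↦ λ ^ (y χ))`.  The subtorus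
`[T,σ] = {t ⋅ σ(t)⁻¹}` is the range of the endomorphism `precomp σ - id`. -/

abbrev TorusPts (X : Type*) [AddCommGroup X] (k : Type*) [Field k] :=
  X →+ Additive kˣ

def precomp {X : Type*} [AddCommGroup X] (k : Type*) [Field k] (f : X →+ X) :
    TorusPts X k →+ TorusPts X k where
  toFun t := t.comp f
  map_zero' := by ext x; simp
  map_add' t s := by ext x; simp

def fixedSub {X : Type*} [AddCommGroup X] (k : Type*) [Field k] (σ : X →+ X) :
    AddSubgroup (TorusPts X k) :=
  AddMonoidHom.ker (precomp k σ - AddMonoidHom.id _)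

def divPart (A : Type*) [AddCommGroup A] : AddSubgroup A :=
  ⨆ H ∈ {H : AddSubgroup A | ∀ m : ℕ, 0 < m → ∀ x ∈ H, ∃ y ∈ H, m • y = x}, H

/-- The subtorus `[T,σ]`, image of `t ↦ t ⋅ σ(t)⁻¹`. -/
def commSub {X : Type*} [AddCommGroup X] (k : Type*) [Field k] (σ : X →+ X) :
    AddSubgroup (TorusPts X k) :=
  AddMonoidHom.range (precomp k σ - AddMonoidHom.id _)

/-- The point of `T` attached to a cocharacter `y ∈ Y(T) = Hom(X, ℤ)` and `λ ∈ kˣ`. -/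
def cochar {X : Type*} [AddCommGroup X] [Module ℤ X] {k : Type*} [Field k]
    (y : X →ₗ[ℤ] ℤ) (lam : kˣ) : TorusPts X k where
  toFun χ := Additive.ofMul (lam ^ (y χ))
  map_zero' := by simp
  map_add' χ χ' := by simp [map_add, zpow_add]

/-! ### Auxiliary lemmas -/

@[simp] lemma precomp_apply {X : Type*} [AddCommGroup X] {k : Type*} [Field k]
    (f : X →+ X) (t : TorusPts X k) (x : X) : precomp k f t x = t (f x) := rfl

@[simp] lemma cochar_apply {X : Type*} [AddCommGroup X] [Module ℤ X] {k : Type*} [Field k]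
    (y : X →ₗ[ℤ] ℤ) (lam : kˣ) (χ : X) :
    cochar y lam χ = Additive.ofMul (lam ^ (y χ)) := rfl

lemma exists_units_pow_eq {k : Type*} [Field k] [IsAlgClosed k] (lam : kˣ) {n : ℕ}
    (hn : 0 < n) : ∃ μ : kˣ, μ ^ n = lam := by
  obtain ⟨z, hz⟩ := IsAlgClosed.exists_pow_nat_eq (lam : k) hn
  have hz0 : z ≠ 0 := by
    intro h0
    rw [h0, zero_pow hn.ne'] at hz
    exact Units.ne_zero lam hz.symm
  exact ⟨Units.mk0 z hz0, Units.ext (by simpa using hz)⟩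

lemma not_forall_zpow_eq_one {k : Type*} [Field k] [IsAlgClosed k] {c : ℤ}
    (hc : c ≠ 0) (h : ∀ lam : kˣ, lam ^ c = 1) : False := by
  classical
  set m := c.natAbs with hm
  have hm0 : 0 < m := Int.natAbs_pos.mpr hc
  have hunit : ∀ lam : kˣ, lam ^ m = 1 := by
    intro lam
    have h1 : lam ^ (m : ℤ) = 1 := by
      rcases Int.natAbs_eq c with h2 | h2
      · rw [← h2]; exact h lam
      · have h3 : lam ^ (-(m : ℤ)) = 1 := by rw [← h2]; exact h lam
        rw [zpow_neg, inv_eq_one] at h3; exact h3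
    rwa [zpow_natCast] at h1
  have hall : ∀ a : k, a ^ (m + 1) = a := by
    intro a
    rcases eq_or_ne a 0 with rfl | ha
    · simp
    · have h4 := hunit (Units.mk0 a ha)
      have h5 : a ^ m = 1 := by
        have := congrArg Units.val h4
        simpa using this
      rw [pow_succ, h5, one_mul]
  set p : Polynomial k := Polynomial.X ^ (m + 1) - Polynomial.X with hp
  have hpne : p ≠ 0 := by
    intro h0
    have h6 := congrArg (fun q => Polynomial.coeff q (m + 1)) h0
    have h7 : (1 : ℕ) ≠ m + 1 := by omega
    simp [hp, Polynomial.coeff_X_pow, Polynomial.coeff_X, h7, hm0.ne'] at h6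
  have hfin : {x : k | p.IsRoot x}.Finite := Polynomial.finite_setOf_isRoot hpne
  have hsub : (Set.univ : Set k) ⊆ {x : k | p.IsRoot x} := by
    intro a _
    simp [hp, Polynomial.IsRoot, hall a]
  exact Set.infinite_univ (hfin.subset hsub)

lemma torus_div {k : Type*} [Field k] [IsAlgClosed k]
    {X : Type*} [AddCommGroup X] [Module.Free ℤ X]
    (t : TorusPts X k) {n : ℕ} (hn : 0 < n) : ∃ s : TorusPts X k, n • s = t := by
  classical
  let b := Module.Free.chooseBasis ℤ X
  choose u hu using fun i => exists_units_pow_eq (Additive.toMul (t (b i))) hn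
  let s' : X →ₗ[ℤ] Additive kˣ := b.constr ℤ (fun i => Additive.ofMul (u i))
  refine ⟨s'.toAddMonoidHom, ?_⟩
  have hls : (n • s' : X →ₗ[ℤ] Additive kˣ) = t.toIntLinearMap := by
    refine b.ext fun i => ?_
    have : s' (b i) = Additive.ofMul (u i) := b.constr_basis ℤ _ i
    rw [LinearMap.smul_apply, this, ← ofMul_pow, hu i]
    rfl
  ext x
  have := LinearMap.congr_fun hls x
  simpa using congrArg (fun a => ((Additive.toMul a : kˣ) : k)) this

lemma sum_range_shift {A : Type*} [AddCommGroup A] (f : ℕ → A) (n : ℕ) (hf : f n = f 0) :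
    ∑ i ∈ Finset.range n, f (i + 1) = ∑ i ∈ Finset.range n, f i := by
  have h1 := Finset.sum_range_succ' f n
  have h2 := Finset.sum_range_succ f n
  rw [h1] at h2
  rw [hf] at h2
  exact add_right_cancel h2

lemma aux_int_sum (f : ℕ → ℤ) (n : ℕ) (hfn : f n = f 0)
    (hsum : ∑ i ∈ Finset.range n, f i = 0) :
    (∑ i ∈ Finset.range n, (i : ℤ) * f (i + 1)) - ∑ i ∈ Finset.range n, (i : ℤ) * f i
      = (n : ℤ) * f 0 := by
  have shift : ∀ g : ℕ → ℤ,
      ∑ i ∈ Finset.range n, g (i + 1) = (∑ i ∈ Finset.range n, g i) + g n - g 0 := by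
    intro g
    have h1 := Finset.sum_range_succ' g n
    have h2 := Finset.sum_range_succ g n
    rw [h1] at h2
    linarith
  have e1 : ∑ i ∈ Finset.range n, (i : ℤ) * f (i + 1)
      = ∑ i ∈ Finset.range n, (((i + 1 : ℕ) : ℤ) * f (i + 1) - f (i + 1)) := by
    refine Finset.sum_congr rfl fun i _ => ?_
    push_cast
    ring
  rw [e1, Finset.sum_sub_distrib, shift (fun i => (i : ℤ) * f i), shift f, hsum, hfn]
  push_cast
  ring

/-- Let `T` be a torus with a finite-order automorphism `σ` of order
`n` and let `[T,σ] = {t ⋅ σ(t)⁻¹}`.  Then (a) every element of `[T,σ] ∩ T^σ` has order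
dividing `n`; (b) `T = [T,σ] ⋅ (T^σ)⁰`; (c) the cocharacter lattice of `[T,σ]` equals
`Ker (1 + σ + ⋯ + σ^{n-1} | Y(T))`. -/
theorem commSub_inter_fixed_and_decomposition_and_cocharacters
    {k : Type*} [Field k] [IsAlgClosed k]
    {X : Type*} [AddCommGroup X] [Module.Free ℤ X] [Module.Finite ℤ X]
    (σ : AddAut X) (n : ℕ) (hn : 0 < n) (hord : addOrderOf σ = n) :
    (∀ t ∈ commSub k ((σ : AddAut X) : X →+ X) ⊓
        fixedSub k ((σ : AddAut X) : X →+ X), n • t = 0) ∧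
    (commSub k ((σ : AddAut X) : X →+ X) ⊔
        AddSubgroup.map (fixedSub k ((σ : AddAut X) : X →+ X)).subtype
          (divPart (fixedSub k ((σ : AddAut X) : X →+ X))) = ⊤) ∧
    (∀ y : X →ₗ[ℤ] ℤ,
        (∀ lam : kˣ, (cochar y lam : TorusPts X k) ∈ commSub k ((σ : AddAut X) : X →+ X))
          ↔ (∑ i ∈ Finset.range n,
              y ∘ₗ (((i • σ : AddAut X) : X →+ X).toIntLinearMap)) = 0) := by
  classical
  have hσn : n • σ = 0 := by rw [← hord]; exact addOrderOf_nsmul_eq_zero σ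
  have hpow : ∀ (i : ℕ) (x : X), ((i + 1) • σ) x = σ ((i • σ) x) := by
    intro i x
    rw [succ_nsmul']
    rfl
  have hpow2 : ∀ (i : ℕ) (x : X), ((i + 1) • σ) x = (i • σ) (σ x) := by
    intro i x
    rw [succ_nsmul]
    rfl
  have hσnx : ∀ x : X, (n • σ) x = x := by intro x; rw [hσn]; rfl
  have hσ0x : ∀ x : X, ((0 : ℕ) • σ) x = x := fun x => rfl
  set pm : TorusPts X k →+ TorusPts X k :=
    precomp k ((σ : AddAut X) : X →+ X) - AddMonoidHom.id (TorusPts X k) with hpm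
  have hpm_apply : ∀ (s : TorusPts X k) (x : X), pm s x = s (σ x) - s x := fun s x => rfl
  refine ⟨?_, ?_, ?_⟩
  -- Part (a)
  · rintro t ⟨⟨s, hs⟩, hf⟩
    have hs' : ∀ x, s (σ x) - s x = t x := fun x => DFunLike.congr_fun hs x
    have hf0 : pm t = 0 := AddMonoidHom.mem_ker.mp hf
    have hf' : ∀ x, t (σ x) = t x := by
      intro x
      have h0 : t (σ x) - t x = 0 := DFunLike.congr_fun hf0 x
      exact sub_eq_zero.mp h0
    have hfix : ∀ (i : ℕ) (x : X), t ((i • σ) x) = t x := by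
      intro i
      induction i with
      | zero => intro x; rw [hσ0x]
      | succ i ih => intro x; rw [hpow, hf', ih]
    ext x : 1
    have h1 : ∑ i ∈ Finset.range n, (s (((i + 1) • σ) x) - s ((i • σ) x))
        = s ((n • σ) x) - s ((0 • σ) x) :=
      Finset.sum_range_sub (fun i => s ((i • σ) x)) n
    have h2 : ∀ i ∈ Finset.range n, s (((i + 1) • σ) x) - s ((i • σ) x) = t x := by
      intro i _
      rw [hpow, hs' ((i • σ) x), hfix i x]
    rw [Finset.sum_congr rfl h2, Finset.sum_const, Finset.card_range, hσnx, hσ0x,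
      sub_self] at h1
    simpa using h1
  -- Part (b)
  · rw [eq_top_iff]
    intro t _
    obtain ⟨s, hs⟩ := torus_div t hn
    set Nm : TorusPts X k →+ TorusPts X k :=
      ∑ i ∈ Finset.range n, precomp k (((i • σ : AddAut X) : X →+ X)) with hNm
    have hNm_eval : ∀ u : TorusPts X k,
        Nm u = ∑ i ∈ Finset.range n, precomp k (((i • σ : AddAut X) : X →+ X)) u := by
      intro u
      rw [hNm, AddMonoidHom.finset_sum_apply]
    have hNm_apply : ∀ (u : TorusPts X k) (x : X),
        Nm u x = ∑ i ∈ Finset.range n, u ((i • σ) x) := by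
      intro u x
      rw [hNm_eval, AddMonoidHom.finset_sum_apply]
      rfl
    have hNfix : ∀ u : TorusPts X k, Nm u ∈ fixedSub k ((σ : AddAut X) : X →+ X) := by
      intro u
      refine AddMonoidHom.mem_ker.mpr ?_
      ext x : 1
      have h4 : Nm u (σ x) = ∑ i ∈ Finset.range n, u (((i + 1) • σ) x) := by
        rw [hNm_apply]
        exact Finset.sum_congr rfl fun i _ => by rw [hpow2]
      have h5 : ∑ i ∈ Finset.range n, u (((i + 1) • σ) x)
          = ∑ i ∈ Finset.range n, u ((i • σ) x) := by
        refine sum_range_shift (fun i => u ((i • σ) x)) n ?_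
        show u ((n • σ) x) = u (((0 : ℕ) • σ) x)
        rw [hσnx, hσ0x]
      show Nm u (σ x) - Nm u x = (0 : TorusPts X k) x
      rw [h4, h5, hNm_apply, sub_self]
      rfl
    have hc : ∀ i : ℕ, precomp k (((i • σ : AddAut X) : X →+ X)) s - s
        ∈ commSub k ((σ : AddAut X) : X →+ X) := by
      intro i
      induction i with
      | zero =>
        have h0 : precomp k (((0 • σ : AddAut X) : X →+ X)) s - s = 0 := by
          ext x : 1
          show s (((0 : ℕ) • σ) x) - s x = (0 : TorusPts X k) x
          rw [hσ0x, sub_self]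
          rfl
        rw [h0]
        exact zero_mem _
      | succ i ih =>
        have hstep : precomp k ((((i + 1) • σ : AddAut X) : X →+ X)) s - s
            = pm (precomp k (((i • σ : AddAut X) : X →+ X)) s)
              + (precomp k (((i • σ : AddAut X) : X →+ X)) s - s) := by
          ext x : 1
          rw [AddMonoidHom.add_apply, hpm_apply]
          show s (((i + 1) • σ) x) - s x
            = (s ((i • σ) (σ x)) - s ((i • σ) x)) + (s ((i • σ) x) - s x)
          rw [← hpow2]
          abel
        rw [hstep]
        exact add_mem ⟨_, rfl⟩ ih
    have hsum_mem : ∑ i ∈ Finset.range n,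
        (precomp k (((i • σ : AddAut X) : X →+ X)) s - s)
          ∈ commSub k ((σ : AddAut X) : X →+ X) :=
      sum_mem fun i _ => hc i
    have hdecomp : t - Nm s
        = -∑ i ∈ Finset.range n, (precomp k (((i • σ : AddAut X) : X →+ X)) s - s) := by
      ext x : 1
      have e1 : Nm s x = ∑ i ∈ Finset.range n, s ((i • σ) x) := hNm_apply s x
      have e2 : t x = n • s x := (DFunLike.congr_fun hs x).symm
      show t x - Nm s x
        = (-∑ i ∈ Finset.range n, (precomp k (((i • σ : AddAut X) : X →+ X)) s - s)) x
      have e3 : (-∑ i ∈ Finset.range n,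
            (precomp k (((i • σ : AddAut X) : X →+ X)) s - s)) x
          = -∑ i ∈ Finset.range n, (s ((i • σ) x) - s x) := by
        rw [AddMonoidHom.neg_apply, AddMonoidHom.finset_sum_apply]
        exact congrArg Neg.neg (Finset.sum_congr rfl fun i _ => rfl)
      rw [e3, e1, e2, Finset.sum_sub_distrib, Finset.sum_const, Finset.card_range]
      abel
    have hmem1 : t - Nm s ∈ commSub k ((σ : AddAut X) : X →+ X) := by
      rw [hdecomp]
      exact neg_mem hsum_mem
    have hDprop : ((AddMonoidHom.range Nm).addSubgroupOf
        (fixedSub k ((σ : AddAut X) : X →+ X))) ∈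
        {H : AddSubgroup (fixedSub k ((σ : AddAut X) : X →+ X)) |
          ∀ m : ℕ, 0 < m → ∀ x ∈ H, ∃ y ∈ H, m • y = x} := by
      intro m hm x hx
      rw [AddSubgroup.mem_addSubgroupOf] at hx
      obtain ⟨u, hu⟩ := hx
      obtain ⟨v, hv⟩ := torus_div u hm
      refine ⟨⟨Nm v, hNfix v⟩, ?_, ?_⟩
      · rw [AddSubgroup.mem_addSubgroupOf]
        exact ⟨v, rfl⟩
      · apply Subtype.ext
        show m • Nm v = (x : TorusPts X k)
        rw [← hu, ← hv]
        exact (map_nsmul Nm m v).symm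
    have hDle : (AddMonoidHom.range Nm).addSubgroupOf
        (fixedSub k ((σ : AddAut X) : X →+ X))
        ≤ divPart (fixedSub k ((σ : AddAut X) : X →+ X)) :=
      le_iSup₂ (f := fun H (_ : H ∈ _) => H) _ hDprop
    have hmem2 : Nm s ∈ AddSubgroup.map (fixedSub k ((σ : AddAut X) : X →+ X)).subtype
        (divPart (fixedSub k ((σ : AddAut X) : X →+ X))) := by
      refine AddSubgroup.mem_map.mpr ⟨⟨Nm s, hNfix s⟩, hDle ?_, rfl⟩
      rw [AddSubgroup.mem_addSubgroupOf]
      exact ⟨s, rfl⟩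
    have hsplit : t = (t - Nm s) + Nm s := by abel
    rw [hsplit]
    exact add_mem (AddSubgroup.mem_sup_left hmem1) (AddSubgroup.mem_sup_right hmem2)
  -- Part (c)
  · intro y
    constructor
    · intro h
      apply LinearMap.ext
      intro χ
      rw [LinearMap.sum_apply, LinearMap.zero_apply]
      show ∑ i ∈ Finset.range n, y ((i • σ) χ) = 0
      set c : ℤ := ∑ i ∈ Finset.range n, y ((i • σ) χ) with hcdef
      by_contra hc0
      refine not_forall_zpow_eq_one (k := k) hc0 fun lam => ?_
      obtain ⟨s, hs⟩ := AddMonoidHom.mem_range.mp (h lam)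
      have hs' : ∀ x, s (σ x) - s x = Additive.ofMul (lam ^ (y x)) :=
        fun x => DFunLike.congr_fun hs x
      have h1 : ∑ i ∈ Finset.range n, (s (((i + 1) • σ) χ) - s ((i • σ) χ))
          = s ((n • σ) χ) - s ((0 • σ) χ) :=
        Finset.sum_range_sub (fun i => s ((i • σ) χ)) n
      have h2 : ∀ i ∈ Finset.range n, s (((i + 1) • σ) χ) - s ((i • σ) χ)
          = Additive.ofMul (lam ^ (y ((i • σ) χ))) := by
        intro i _
        rw [hpow]
        exact hs' _
      rw [Finset.sum_congr rfl h2, hσnx, hσ0x, sub_self] at h1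
      have h4 : Additive.ofMul (lam ^ c) = 0 := by
        have hmap := map_sum (zmultiplesHom (Additive kˣ) (Additive.ofMul lam))
          (fun i => y ((i • σ) χ)) (Finset.range n)
        rw [ofMul_zpow, ← zmultiplesHom_apply, hcdef, hmap]
        refine Eq.trans (Finset.sum_congr rfl fun i _ => ?_) h1
        rw [zmultiplesHom_apply, ← ofMul_zpow]
      have h5 : Additive.ofMul (lam ^ c) = Additive.ofMul (1 : kˣ) := by
        rw [h4]; rfl
      exact Additive.ofMul.injective h5
    · intro h lam
      obtain ⟨μ, hμ⟩ := exists_units_pow_eq lam hn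
      set z : X →ₗ[ℤ] ℤ :=
        ∑ i ∈ Finset.range n,
          (i : ℤ) • (y ∘ₗ (((i • σ : AddAut X) : X →+ X).toIntLinearMap)) with hzdef
      have hz_apply : ∀ x : X, z x = ∑ i ∈ Finset.range n, (i : ℤ) * y ((i • σ) x) := by
        intro x
        rw [hzdef, LinearMap.sum_apply]
        refine Finset.sum_congr rfl fun i _ => ?_
        rw [LinearMap.smul_apply, smul_eq_mul]
        rfl
      have hsum0 : ∀ x : X, ∑ i ∈ Finset.range n, y ((i • σ) x) = 0 := by
        intro x
        have h0 := LinearMap.congr_fun h x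
        rw [LinearMap.sum_apply, LinearMap.zero_apply] at h0
        exact h0
      have hkey : ∀ χ : X, z (σ χ) - z χ = (n : ℤ) * y χ := by
        intro χ
        have hf : y ((n • σ) χ) = y (((0 : ℕ) • σ) χ) := by rw [hσnx, hσ0x]
        have haux := aux_int_sum (fun j => y ((j • σ) χ)) n hf (hsum0 χ)
        have e2 : z (σ χ) = ∑ i ∈ Finset.range n, (i : ℤ) * y (((i + 1) • σ) χ) := by
          rw [hz_apply]
          exact Finset.sum_congr rfl fun i _ => by rw [hpow2]
        rw [e2, hz_apply χ]
        simpa [hσ0x] using haux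
      refine AddMonoidHom.mem_range.mpr ⟨cochar z μ, ?_⟩
      ext χ : 1
      show cochar z μ (σ χ) - cochar z μ χ = cochar y lam χ
      rw [cochar_apply, cochar_apply, cochar_apply, ← ofMul_div, div_eq_mul_inv,
        ← zpow_sub, hkey χ, zpow_mul, zpow_natCast, hμ]
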